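/- With the additive disruption function φ = φ^sum and homogeneous risk (r_{i,j} = r for all i,j and some r ∈ [0,1]), the expected social welfare is the same for all 𝒬-clustered networks: Ŵ(A^𝒬) = Ŵ(A^{𝒬'}) for any two partitions 𝒬, 𝒬' of {1,…,n}. -/
import Mathlib


/-!
Replicate economy with n countries and L categories; firms = `Fin L × Fin n`
(category, country); partitions of the countries are `Setoid (Fin n)`;
`AQ B Q` is the 𝒬-clustered network A^𝒬. Each link (i,j) is disrupted
independently with probability r i j; under Hicks-neutral productivity the
expected social welfare of a network A is
Ŵ(A) = Σ_{K ⊆ M×M} [Π_{(i,j)∉K}(1 − r_{i,j}) Π_{(i,j)∈K} r_{i,j}]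
        (a_0^n ⋅ (I − A)⁻¹ u_K),
with (u_K)_i = φ_i(K,A) log(1 − ρ) + b_{ℓ(i),0} log b_{ℓ(i),0}, where
`phiSum` is the additive disruption function φ^sum.

STATEMENT 17: with φ = φ^sum and homogeneous risk (r_{i,j} = r ∈ [0,1]), the
expected social welfare is the same for all 𝒬-clustered networks.
-/

noncomputable section

open Matrix Finset

attribute [local instance] Classical.propDecidable

/-- Firms: (category, country). -/
abbrev Firm (L n : ℕ) := Fin L × Fin n

/-- Cardinality of the cluster (equivalence class) of country `c`. -/
def clusterCard {n : ℕ} (Q : Setoid (Fin n)) (c : Fin n) : ℕ :=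
  (univ.filter fun c' => Q.r c c').card

/-- The 𝒬-clustered production network A^𝒬. -/
def AQ {L n : ℕ} (B : Fin L → Fin L → ℝ) (Q : Setoid (Fin n)) :
    Matrix (Firm L n) (Firm L n) ℝ :=
  Matrix.of fun i j =>
    if i.1 = j.1 then (if i = j then B i.1 i.1 else 0)
    else if Q.r i.2 j.2 then B i.1 j.1 / (clusterCard Q i.2 : ℝ) else 0

/-- Household consumption shares on firms: a0 ℓ / n. -/
def a0n {L : ℕ} (n : ℕ) (a0 : Fin L → ℝ) : Firm L n → ℝ :=
  fun i => a0 i.1 / n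

/-- Min-disruption function φ^min: for each category, the smallest disrupted
positive input share (0 if no such link). -/
def phiMin {L n : ℕ} (A : Matrix (Firm L n) (Firm L n) ℝ)
    (K : Finset (Firm L n × Firm L n)) (i : Firm L n) : ℝ :=
  ∑ ℓ : Fin L,
    (if h : (univ.filter fun j : Firm L n =>
        j.1 = ℓ ∧ (i, j) ∈ K ∧ 0 < A i j).Nonempty
     then (univ.filter fun j : Firm L n =>
        j.1 = ℓ ∧ (i, j) ∈ K ∧ 0 < A i j).inf' h (fun j => A i j)
     else 0)

/-- Additive disruption function φ^sum. -/
def phiSum {L n : ℕ} (A : Matrix (Firm L n) (Firm L n) ℝ)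
    (K : Finset (Firm L n × Firm L n)) (i : Firm L n) : ℝ :=
  ∑ j ∈ univ.filter (fun j : Firm L n => (i, j) ∈ K ∧ 0 < A i j), A i j

/-- Disrupted entropy-corrected productivity vector u_K. -/
def uK {L n : ℕ} (b0 : Fin L → ℝ) (ρ : ℝ)
    (φ : Matrix (Firm L n) (Firm L n) ℝ → Finset (Firm L n × Firm L n) → Firm L n → ℝ)
    (A : Matrix (Firm L n) (Firm L n) ℝ) (K : Finset (Firm L n × Firm L n)) :
    Firm L n → ℝ :=
  fun i => φ A K i * Real.log (1 - ρ) + b0 i.1 * Real.log (b0 i.1)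

/-- Expected social welfare Ŵ(A). -/
def What {L n : ℕ} (a0 b0 : Fin L → ℝ) (ρ : ℝ) (r : Firm L n → Firm L n → ℝ)
    (φ : Matrix (Firm L n) (Firm L n) ℝ → Finset (Firm L n × Firm L n) → Firm L n → ℝ)
    (A : Matrix (Firm L n) (Firm L n) ℝ) : ℝ :=
  ∑ K : Finset (Firm L n × Firm L n),
    ((∏ p ∈ Kᶜ, (1 - r p.1 p.2)) * ∏ p ∈ K, r p.1 p.2) *
      (a0n n a0 ⬝ᵥ ((1 - A)⁻¹.mulVec (uK b0 ρ φ A K)))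

/-! ### Auxiliary lemmas -/

section ProbAux

variable {α : Type*} [Fintype α] [DecidableEq α]

lemma weight_sum_eq_one (r0 : ℝ) :
    ∑ K : Finset α, (∏ _p ∈ Kᶜ, (1 - r0)) * ∏ _p ∈ K, r0 = 1 := by
  have h := Finset.prod_add (fun _ : α => r0) (fun _ : α => 1 - r0) Finset.univ
  rw [Finset.powerset_univ] at h
  calc ∑ K : Finset α, (∏ _p ∈ Kᶜ, (1 - r0)) * ∏ _p ∈ K, r0
      = ∑ K : Finset α, (∏ _p ∈ K, r0) * ∏ _p ∈ univ \ K, (1 - r0) := by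
        refine Finset.sum_congr rfl fun K _ => ?_
        rw [← Finset.compl_eq_univ_sdiff, mul_comm]
    _ = ∏ _p : α, (r0 + (1 - r0)) := h.symm
    _ = 1 := by simp

lemma weight_marked (r0 : ℝ) (p : α) :
    ∑ K : Finset α, ((∏ _q ∈ Kᶜ, (1 - r0)) * ∏ _q ∈ K, r0) *
      (if p ∈ K then (1 : ℝ) else 0) = r0 := by
  have key : ∀ K : Finset α,
      ((∏ _q ∈ Kᶜ, (1 - r0)) * ∏ _q ∈ K, r0) * (if p ∈ K then (1 : ℝ) else 0)
      = (∏ _q ∈ K, r0) * ∏ q ∈ Kᶜ, (if q = p then 0 else (1 - r0)) := by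
    intro K
    by_cases hp : p ∈ K
    · rw [if_pos hp, mul_one, mul_comm]
      congr 1
      refine Finset.prod_congr rfl fun q hq => ?_
      rw [if_neg]
      rintro rfl
      exact (Finset.mem_compl.mp hq) hp
    · rw [if_neg hp, mul_zero]
      refine (mul_eq_zero_of_right _ ?_).symm
      exact Finset.prod_eq_zero (Finset.mem_compl.mpr hp) (if_pos rfl)
  rw [Finset.sum_congr rfl fun K _ => key K]
  have h := Finset.prod_add (fun _ : α => r0)
    (fun q : α => if q = p then 0 else (1 - r0)) Finset.univ
  rw [Finset.powerset_univ] at h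
  have h2 : ∑ K : Finset α,
      (∏ _q ∈ K, r0) * ∏ q ∈ Kᶜ, (if q = p then 0 else (1 - r0))
      = ∏ q : α, (r0 + if q = p then 0 else (1 - r0)) := by
    rw [h]
    refine Finset.sum_congr rfl fun K _ => ?_
    rw [← Finset.compl_eq_univ_sdiff]
  rw [h2]
  have h3 : ∀ q : α, (r0 + if q = p then 0 else (1 - r0))
      = if q = p then r0 else 1 := by
    intro q; by_cases hq : q = p <;> simp [hq]
  rw [Finset.prod_congr rfl fun q _ => h3 q,
    Finset.prod_ite_eq' Finset.univ p (fun _ => r0), if_pos (Finset.mem_univ p)]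

end ProbAux

section NormAux

open scoped NNReal

attribute [local instance] Matrix.linftyOpNormedRing Matrix.linftyOpNormedAlgebra

lemma isUnit_one_sub_of_rowsum_lt {ι : Type*} [Fintype ι] [DecidableEq ι]
    (A : Matrix ι ι ℝ) (h : ∀ i, ∑ j, |A i j| < 1) : IsUnit (1 - A) := by
  have hnn : ‖A‖₊ < 1 := by
    rw [Matrix.linfty_opNNNorm_def]
    refine Finset.sup_lt_iff (by norm_num) |>.mpr fun i _ => ?_
    have hi := h i
    rw [← NNReal.coe_lt_coe]
    push_cast
    simpa [Real.norm_eq_abs] using hi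
  have hnorm : ‖A‖ < 1 := by
    rw [← NNReal.coe_lt_one, ← coe_nnnorm] at *
    exact hnn
  exact (Units.oneSub A hnorm).isUnit

end NormAux

section AQAux

variable {L n : ℕ}

lemma clusterCard_pos {n : ℕ} (Q : Setoid (Fin n)) (c : Fin n) :
    0 < clusterCard Q c :=
  Finset.card_pos.mpr ⟨c, Finset.mem_filter.mpr ⟨Finset.mem_univ c, Q.iseqv.refl c⟩⟩

lemma AQ_nonneg (B : Fin L → Fin L → ℝ) (hB : ∀ ℓ ℓ', 0 ≤ B ℓ ℓ')
    (Q : Setoid (Fin n)) (i j : Firm L n) : 0 ≤ AQ B Q i j := by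
  unfold AQ
  simp only [Matrix.of_apply]
  split_ifs with h1 h2 h3
  · exact hB _ _
  · exact le_refl 0
  · exact div_nonneg (hB _ _) (Nat.cast_nonneg _)
  · exact le_refl 0

/-- Block row sums of a clustered network depend only on the categories. -/
lemma AQ_rowBlockSum (B : Fin L → Fin L → ℝ) (Q : Setoid (Fin n))
    (i : Firm L n) (ℓ' : Fin L) :
    ∑ c' : Fin n, AQ B Q i (ℓ', c') = B i.1 ℓ' := by
  obtain ⟨ℓi, ci⟩ := i
  by_cases hℓ : ℓi = ℓ'
  · subst hℓ
    have h1 : ∀ c' : Fin n, AQ B Q (ℓi, ci) (ℓi, c')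
        = if ci = c' then B ℓi ℓi else 0 := by
      intro c'
      unfold AQ
      simp [Prod.ext_iff]
    simp only [h1]
    simp
  · have hcard : (0 : ℝ) < (clusterCard Q ci : ℝ) :=
      Nat.cast_pos.mpr (clusterCard_pos Q ci)
    have h1 : ∀ c' : Fin n, AQ B Q (ℓi, ci) (ℓ', c')
        = if Q.r ci c' then B ℓi ℓ' / (clusterCard Q ci : ℝ) else 0 := by
      intro c'
      unfold AQ
      simp [hℓ]
    simp only [h1]
    rw [← Finset.sum_filter, Finset.sum_const, nsmul_eq_mul]
    have : ((univ.filter fun c' => Q.r ci c').card : ℝ)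
        = (clusterCard Q ci : ℝ) := by
      unfold clusterCard; norm_num
    rw [this, mul_comm, div_mul_cancel₀ _ (ne_of_gt hcard)]

/-- Row sums of positive entries of a clustered network depend only on categories. -/
lemma AQ_posRowSum (B : Fin L → Fin L → ℝ) (hB : ∀ ℓ ℓ', 0 ≤ B ℓ ℓ')
    (Q : Setoid (Fin n)) (i : Firm L n) :
    ∑ j : Firm L n, (if 0 < AQ B Q i j then AQ B Q i j else 0)
    = ∑ ℓ' : Fin L, (if 0 < B i.1 ℓ' then B i.1 ℓ' else 0) := by
  rw [Fintype.sum_prod_type]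
  refine Finset.sum_congr rfl fun ℓ' _ => ?_
  obtain ⟨ℓi, ci⟩ := i
  by_cases hℓ : ℓi = ℓ'
  · subst hℓ
    have h1 : ∀ c' : Fin n, AQ B Q (ℓi, ci) (ℓi, c')
        = if ci = c' then B ℓi ℓi else 0 := by
      intro c'
      unfold AQ
      simp [Prod.ext_iff]
    have h2 : ∀ c' : Fin n,
        (if 0 < AQ B Q (ℓi, ci) (ℓi, c') then AQ B Q (ℓi, ci) (ℓi, c') else 0)
        = if ci = c' then (if 0 < B ℓi ℓi then B ℓi ℓi else 0) else 0 := by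
      intro c'
      rw [h1]
      by_cases hc : ci = c' <;> simp [hc]
    simp only [h2]
    simp
  · have hcard : (0 : ℝ) < (clusterCard Q ci : ℝ) :=
      Nat.cast_pos.mpr (clusterCard_pos Q ci)
    by_cases hb : 0 < B ℓi ℓ'
    · have h1 : ∀ c' : Fin n,
          (if 0 < AQ B Q (ℓi, ci) (ℓ', c') then AQ B Q (ℓi, ci) (ℓ', c') else 0)
          = AQ B Q (ℓi, ci) (ℓ', c') := by
        intro c'
        unfold AQ
        by_cases hq : Q.r ci c' <;>
          simp [hℓ, hq, div_pos hb hcard]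
      simp only [h1]
      rw [AQ_rowBlockSum B Q (ℓi, ci) ℓ', if_pos hb]
    · have hb0 : B ℓi ℓ' = 0 := le_antisymm (not_lt.mp hb) (hB _ _)
      have h1 : ∀ c' : Fin n,
          (if 0 < AQ B Q (ℓi, ci) (ℓ', c') then AQ B Q (ℓi, ci) (ℓ', c') else 0)
          = 0 := by
        intro c'
        unfold AQ
        by_cases hq : Q.r ci c' <;> simp [hℓ, hq, hb0]
      simp only [h1]
      simp [hb]

/-- `AQ` applied to a category-constant vector. -/
lemma AQ_mulVec_const (B : Fin L → Fin L → ℝ) (Q : Setoid (Fin n))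
    (V : Fin L → ℝ) (i : Firm L n) :
    (AQ B Q).mulVec (fun j => V j.1) i = ∑ ℓ' : Fin L, B i.1 ℓ' * V ℓ' := by
  simp only [Matrix.mulVec, dotProduct]
  rw [Fintype.sum_prod_type]
  refine Finset.sum_congr rfl fun ℓ' _ => ?_
  have hbeta : ∑ y : Fin n, AQ B Q i (ℓ', y) * V (ℓ', y).1
      = ∑ y : Fin n, AQ B Q i (ℓ', y) * V ℓ' := rfl
  rw [hbeta, ← Finset.sum_mul, AQ_rowBlockSum]

end AQAux

section ExpAux

variable {L n : ℕ}

/-- Expectation of `phiSum` under homogeneous link risk `r0`. -/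
lemma exp_phiSum (r0 : ℝ) (A : Matrix (Firm L n) (Firm L n) ℝ) (j : Firm L n) :
    ∑ K : Finset (Firm L n × Firm L n),
      ((∏ p ∈ Kᶜ, (1 - r0)) * ∏ p ∈ K, r0) * phiSum A K j
    = r0 * ∑ j' : Firm L n, (if 0 < A j j' then A j j' else 0) := by
  have hphi : ∀ K : Finset (Firm L n × Firm L n), phiSum A K j
      = ∑ j' : Firm L n,
        (if 0 < A j j' then A j j' else 0) * (if (j, j') ∈ K then (1 : ℝ) else 0) := by
    intro K
    rw [phiSum, Finset.sum_filter]
    refine Finset.sum_congr rfl fun j' _ => ?_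
    by_cases h1 : (j, j') ∈ K <;> by_cases h2 : 0 < A j j' <;> simp [h1, h2]
  simp only [hphi, Finset.mul_sum]
  rw [Finset.sum_comm]
  refine Finset.sum_congr rfl fun j' _ => ?_
  calc ∑ K : Finset (Firm L n × Firm L n),
        ((∏ p ∈ Kᶜ, (1 - r0)) * ∏ p ∈ K, r0) *
          ((if 0 < A j j' then A j j' else 0) * (if (j, j') ∈ K then (1 : ℝ) else 0))
      = (if 0 < A j j' then A j j' else 0) *
          ∑ K : Finset (Firm L n × Firm L n),
            ((∏ p ∈ Kᶜ, (1 - r0)) * ∏ p ∈ K, r0) *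
              (if (j, j') ∈ K then (1 : ℝ) else 0) := by
        rw [Finset.mul_sum]
        exact Finset.sum_congr rfl fun K _ => by ring
    _ = r0 * (if 0 < A j j' then A j j' else 0) := by
        rw [weight_marked r0 (j, j')]; ring

/-- Swapping the sums in the expected welfare. -/
lemma What_swap (a0 b0 : Fin L → ℝ) (ρ r0 : ℝ)
    (φ : Matrix (Firm L n) (Firm L n) ℝ → Finset (Firm L n × Firm L n) → Firm L n → ℝ)
    (A : Matrix (Firm L n) (Firm L n) ℝ) :
    What a0 b0 ρ (fun _ _ => r0) φ A
    = ∑ i : Firm L n, a0n n a0 i * ∑ j : Firm L n, (1 - A)⁻¹ i j *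
        (∑ K : Finset (Firm L n × Firm L n),
          ((∏ p ∈ Kᶜ, (1 - r0)) * ∏ p ∈ K, r0) * uK b0 ρ φ A K j) := by
  unfold What
  simp only [dotProduct, Matrix.mulVec, Finset.mul_sum, Finset.sum_mul]
  rw [Finset.sum_comm]
  refine Finset.sum_congr rfl fun i _ => ?_
  rw [Finset.sum_comm]
  refine Finset.sum_congr rfl fun j _ => ?_
  refine Finset.sum_congr rfl fun K _ => ?_
  ring

end ExpAux

theorem sum_disruption_homogeneous_welfare_invariance
    (n L : ℕ) (hn : 1 ≤ n) (hL : 1 ≤ L)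
    (a0 b0 : Fin L → ℝ) (B : Fin L → Fin L → ℝ)
    (ha0 : ∀ ℓ, 0 < a0 ℓ) (ha0sum : ∑ ℓ, a0 ℓ = 1)
    (hb0 : ∀ ℓ, 0 < b0 ℓ) (hB : ∀ ℓ ℓ', 0 ≤ B ℓ ℓ')
    (hrow : ∀ ℓ, b0 ℓ + ∑ ℓ', B ℓ ℓ' ≤ 1)
    (ρ : ℝ) (hρ : ρ ∈ Set.Ico (0 : ℝ) 1)
    (r : Firm L n → Firm L n → ℝ)
    (hr : ∃ r0 ∈ Set.Icc (0 : ℝ) 1, ∀ i j : Firm L n, r i j = r0)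
    (Q Q' : Setoid (Fin n)) :
    What a0 b0 ρ r phiSum (AQ B Q) = What a0 b0 ρ r phiSum (AQ B Q') := by
  obtain ⟨r0, _hr0, hrr⟩ := hr
  have hrw : r = fun _ _ => r0 := funext fun i => funext fun j => hrr i j
  subst hrw
  -- category-level data
  set Bm : Matrix (Fin L) (Fin L) ℝ := Matrix.of B with hBm
  have hBmUnit : IsUnit (1 - Bm) := by
    refine isUnit_one_sub_of_rowsum_lt _ fun ℓ => ?_
    have h1 := hrow ℓ
    have h2 := hb0 ℓ
    calc ∑ ℓ', |Bm ℓ ℓ'| = ∑ ℓ', B ℓ ℓ' :=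
          Finset.sum_congr rfl fun ℓ' _ => abs_of_nonneg (hB ℓ ℓ')
      _ < 1 := by linarith
  set V : Fin L → ℝ := fun ℓ =>
    r0 * (∑ ℓ', if 0 < B ℓ ℓ' then B ℓ ℓ' else 0) * Real.log (1 - ρ)
      + b0 ℓ * Real.log (b0 ℓ) with hV
  set W : Fin L → ℝ := (1 - Bm)⁻¹.mulVec V with hW
  have hWV : (1 - Bm).mulVec W = V := by
    rw [hW, Matrix.mulVec_mulVec,
      Matrix.mul_nonsing_inv _ ((Matrix.isUnit_iff_isUnit_det _).mp hBmUnit),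
      Matrix.one_mulVec]
  suffices H : ∀ Q : Setoid (Fin n),
      What a0 b0 ρ (fun _ _ => r0) phiSum (AQ B Q)
      = ∑ i : Firm L n, a0n n a0 i * W i.1 by
    rw [H Q, H Q']
  intro Q
  -- invertibility of 1 - A^Q
  have hAunit : IsUnit (1 - AQ B Q) := by
    refine isUnit_one_sub_of_rowsum_lt _ fun i => ?_
    have h1 := hrow i.1
    have h2 := hb0 i.1
    calc ∑ j, |AQ B Q i j| = ∑ j, AQ B Q i j :=
          Finset.sum_congr rfl fun j _ => abs_of_nonneg (AQ_nonneg B hB Q i j)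
      _ = ∑ ℓ' : Fin L, B i.1 ℓ' := by
          rw [Fintype.sum_prod_type]
          exact Finset.sum_congr rfl fun ℓ' _ => AQ_rowBlockSum B Q i ℓ'
      _ < 1 := by linarith
  -- the expected productivity vector is category-constant
  have hv : ∀ j : Firm L n,
      (∑ K : Finset (Firm L n × Firm L n),
        ((∏ p ∈ Kᶜ, (1 - r0)) * ∏ p ∈ K, r0) * uK b0 ρ phiSum (AQ B Q) K j)
      = V j.1 := by
    intro j
    have hsplit : ∀ K : Finset (Firm L n × Firm L n),
        ((∏ p ∈ Kᶜ, (1 - r0)) * ∏ p ∈ K, r0) * uK b0 ρ phiSum (AQ B Q) K j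
        = (((∏ p ∈ Kᶜ, (1 - r0)) * ∏ p ∈ K, r0) * phiSum (AQ B Q) K j) *
            Real.log (1 - ρ)
          + ((∏ p ∈ Kᶜ, (1 - r0)) * ∏ p ∈ K, r0) *
            (b0 j.1 * Real.log (b0 j.1)) := by
      intro K
      rw [uK]
      ring
    rw [Finset.sum_congr rfl fun K _ => hsplit K, Finset.sum_add_distrib,
      ← Finset.sum_mul, ← Finset.sum_mul, exp_phiSum r0 (AQ B Q) j,
      AQ_posRowSum B hB Q j, weight_sum_eq_one r0, one_mul]
  -- solve the linear system
  have hmv : (1 - AQ B Q).mulVec (fun j : Firm L n => W j.1)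
      = fun j : Firm L n => V j.1 := by
    funext j
    have h1 := AQ_mulVec_const B Q W j
    have h2 := congrFun hWV j.1
    rw [Matrix.sub_mulVec, Matrix.one_mulVec] at h2 ⊢
    have h3 : Bm.mulVec W j.1 = ∑ ℓ' : Fin L, B j.1 ℓ' * W ℓ' := by
      unfold Matrix.mulVec dotProduct
      rfl
    simp only [Pi.sub_apply] at h2 ⊢
    rw [h1, ← h3, h2]
  have hinvv : (1 - AQ B Q)⁻¹.mulVec (fun j : Firm L n => V j.1)
      = fun j : Firm L n => W j.1 := by
    conv_lhs => rw [← hmv]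
    rw [Matrix.mulVec_mulVec,
      Matrix.nonsing_inv_mul _ ((Matrix.isUnit_iff_isUnit_det _).mp hAunit),
      Matrix.one_mulVec]
  rw [What_swap]
  refine Finset.sum_congr rfl fun i _ => ?_
  congr 1
  have : ∑ j : Firm L n, (1 - AQ B Q)⁻¹ i j *
      (∑ K : Finset (Firm L n × Firm L n),
        ((∏ p ∈ Kᶜ, (1 - r0)) * ∏ p ∈ K, r0) * uK b0 ρ phiSum (AQ B Q) K j)
      = ∑ j : Firm L n, (1 - AQ B Q)⁻¹ i j * V j.1 :=
    Finset.sum_congr rfl fun j _ => by rw [hv j]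
  rw [this]
  exact congrFun hinvv i

end
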